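/- Let Q be a simple binary join query, G = (V, E) the hypergraph defined by Q, and W any fractional edge covering of G. Then |Join(Q)| ≤ ∏_{e ∈ E} |R_e|^{W(e)}. -/

import Mathlib

open scoped BigOperators Classical

namespace BinaryJoins

/-! ### Hypergraphs, fractional edge coverings and packings

A hypergraph is given by a finite vertex set `V : Finset α` and a finite
edge set `E : Finset (Finset α)`.  A weight assignment is a function
`W : Finset α → ℝ` (only its values on `E` matter). -/

variable {α : Type} [DecidableEq α]

/-- The weight of a vertex `X`: the sum of the weights of all edges incident to `X`. -/
def vertexWeight (E : Finset (Finset α)) (W : Finset α → ℝ) (X : α) : ℝ :=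
  ∑ e ∈ E.filter (fun e => X ∈ e), W e

/-- `W` is a fractional edge covering: edge weights lie in `[0,1]` and every
vertex of `V` has weight at least 1. -/
def IsFracEdgeCover (V : Finset α) (E : Finset (Finset α)) (W : Finset α → ℝ) : Prop :=
  (∀ e ∈ E, 0 ≤ W e ∧ W e ≤ 1) ∧ ∀ X ∈ V, 1 ≤ vertexWeight E W X

/-- `W` is a fractional edge packing: edge weights lie in `[0,1]` and every
vertex of `V` has weight at most 1. -/
def IsFracEdgePack (V : Finset α) (E : Finset (Finset α)) (W : Finset α → ℝ) : Prop :=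
  (∀ e ∈ E, 0 ≤ W e ∧ W e ≤ 1) ∧ ∀ X ∈ V, vertexWeight E W X ≤ 1

/-- The fractional edge covering number `ρ`: the smallest total weight of a
fractional edge covering. -/
noncomputable def rho (V : Finset α) (E : Finset (Finset α)) : ℝ :=
  sInf {t | ∃ W : Finset α → ℝ, IsFracEdgeCover V E W ∧ t = ∑ e ∈ E, W e}

/-- The fractional edge packing number `τ`: the largest total weight of a
fractional edge packing. -/
noncomputable def tau (V : Finset α) (E : Finset (Finset α)) : ℝ :=
  sSup {t | ∃ W : Finset α → ℝ, IsFracEdgePack V E W ∧ t = ∑ e ∈ E, W e}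

/-- A binary hypergraph: every edge is a 2-element subset of `V`, and every
vertex is incident to at least one edge. -/
def BinaryHG (V : Finset α) (E : Finset (Finset α)) : Prop :=
  (∀ e ∈ E, e ⊆ V ∧ e.card = 2) ∧ ∀ X ∈ V, ∃ e ∈ E, X ∈ e


/-! ### Tuples, relations, and join queries

`dom` is the domain of values; a tuple over a set `U` of attributes is
represented as a function `att → Option dom` that is `some`-valued exactly
on `U`. -/

variable {att dom : Type}

/-- A (partial) tuple. -/
abbrev Tup (att dom : Type) := att → Option dom

/-- `u` is a tuple over the attribute set `U`. -/
def IsTupleOn (u : Tup att dom) (U : Set att) : Prop :=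
  ∀ x : att, (u x).isSome ↔ x ∈ U

/-- The projection (restriction) of a tuple on an attribute set `V`. -/
noncomputable def restrict (u : Tup att dom) (V : Set att) : Tup att dom :=
  fun x => if x ∈ V then u x else none

/-- A relation: a finite set of tuples over a common scheme. -/
structure Relation (att dom : Type) where
  scheme : Finset att
  tuples : Set (Tup att dom)
  finite : tuples.Finite
  wf : ∀ u ∈ tuples, IsTupleOn u ↑scheme

variable [DecidableEq att]

/-- A join query is a finite set of relations; `attset Q` is the set of all
attributes appearing in the schemes of its relations. -/
def attset (Q : Finset (Relation att dom)) : Finset att :=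
  Q.biUnion fun R => R.scheme

/-- The result `Join(Q)` of a join query. -/
def JoinQ (Q : Finset (Relation att dom)) : Set (Tup att dom) :=
  { u | IsTupleOn u ↑(attset Q) ∧ ∀ R ∈ Q, restrict u ↑R.scheme ∈ R.tuples }

/-- A query is simple if no two distinct relations share a scheme. -/
def SimpleQ (Q : Finset (Relation att dom)) : Prop :=
  ∀ R ∈ Q, ∀ S ∈ Q, R.scheme = S.scheme → R = S

/-- A query is binary if every relation's scheme has exactly two attributes. -/
def BinaryQ (Q : Finset (Relation att dom)) : Prop :=
  ∀ R ∈ Q, R.scheme.card = 2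

/-- The input size `m` of a query. -/
noncomputable def inputSize (Q : Finset (Relation att dom)) : ℕ :=
  ∑ R ∈ Q, R.tuples.ncard

/-- The edge set of the hypergraph defined by `Q` (its vertex set is `attset Q`). -/
def edgeSet (Q : Finset (Relation att dom)) : Finset (Finset att) :=
  Q.image fun R => R.scheme

/-! ### Heavy and light values -/

/-- Value `x` is heavy on attribute `X`: some relation of `Q` has at least
`m/λ` tuples carrying `x` on `X`. -/
def HeavyOn (Q : Finset (Relation att dom)) (lam : ℕ) (X : att) (x : dom) : Prop :=
  ∃ R ∈ Q, X ∈ R.scheme ∧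
    (inputSize Q : ℝ) / (lam : ℝ) ≤ ({u ∈ R.tuples | u X = some x}.ncard : ℝ)

/-- Value `x` is heavy (on some attribute). -/
def Heavy (Q : Finset (Relation att dom)) (lam : ℕ) (x : dom) : Prop :=
  ∃ X : att, HeavyOn Q lam X x

/-- Value `x` appears in at least one relation of `Q`. -/
def Appears (Q : Finset (Relation att dom)) (x : dom) : Prop :=
  ∃ R ∈ Q, ∃ X ∈ R.scheme, ∃ u ∈ R.tuples, u X = some x

/-- Value `x` appears on attribute `Y` in a relation of `Q`. -/
def AppearsOn (Q : Finset (Relation att dom)) (Y : att) (x : dom) : Prop :=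
  ∃ R ∈ Q, Y ∈ R.scheme ∧ ∃ u ∈ R.tuples, u Y = some x

/-! ### Configurations and residual queries

Below, `Hv : att → dom → Prop` is the "heavy" predicate (`Hv X x` meaning
that value `x` is heavy on attribute `X`); in applications it is
instantiated with `HeavyOn Q lam`. -/

/-- The set `config(Q, H)` of configurations of `H`: tuples over `H` whose
values are heavy. -/
def config (Hv : att → dom → Prop) (H : Finset att) : Set (Tup att dom) :=
  { η | IsTupleOn η ↑H ∧ ∀ X ∈ H, ∀ x : dom, η X = some x → Hv X x }

/-- The residual relation `R'ₑ(η)` (over `e \ H`) of the relation `R` with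
scheme `e`, under configuration `η` of `H`: projections on `e \ H` of the
tuples of `R` that agree with `η` on `e ∩ H` and are light outside `H`. -/
def ResidualTuples (Q : Finset (Relation att dom)) (Hv : att → dom → Prop)
    (H : Finset att) (η : Tup att dom) (R : Relation att dom) : Set (Tup att dom) :=
  { v | ∃ w ∈ R.tuples,
      (∀ X ∈ R.scheme ∩ H, w X = η X) ∧
      (∀ Y ∈ R.scheme \ H, ∀ y : dom, w Y = some y → ¬ Hv Y y ∧ Appears Q y) ∧
      v = restrict w ↑(R.scheme \ H) }

/-- The result of the residual query `Q'(η)`: tuples over `attset Q \ H`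
whose projection on each active edge `e` belongs to `R'ₑ(η)`. -/
def JoinResidual (Q : Finset (Relation att dom)) (Hv : att → dom → Prop)
    (H : Finset att) (η : Tup att dom) : Set (Tup att dom) :=
  { u | IsTupleOn u ↑(attset Q \ H) ∧
      ∀ R ∈ Q, (R.scheme \ H).Nonempty →
        restrict u ↑(R.scheme \ H) ∈ ResidualTuples Q Hv H η R }

/-- `m_η`: the total size of the relations of the residual query `Q'(η)`. -/
noncomputable def residualSize (Q : Finset (Relation att dom)) (Hv : att → dom → Prop)
    (H : Finset att) (η : Tup att dom) : ℕ :=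
  ∑ R ∈ Q, if (R.scheme \ H).Nonempty then (ResidualTuples Q Hv H η R).ncard else 0

/-- Combine a tuple over a set disjoint from `H` with a configuration `η` over `H`. -/
def combine (H : Finset att) (η u : Tup att dom) : Tup att dom :=
  fun x => if x ∈ H then η x else u x

/-! ### Cross edges, isolated attributes, and the semi-join reduction -/

/-- `e` is a cross edge w.r.t. `H`: it meets both `H` and its complement. -/
def IsCross (H : Finset att) (e : Finset att) : Prop :=
  (e ∩ H).Nonempty ∧ (e \ H).Nonempty

/-- The set `I` of isolated attributes: light attributes `X` such that `{X}`
is the only edge incident to `X` in the subgraph induced by the light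
attributes `L = attset Q \ H`. -/
def isolatedSet (Q : Finset (Relation att dom)) (H : Finset att) : Finset att :=
  (attset Q \ H).filter fun X => ∀ R ∈ Q, X ∈ R.scheme → R.scheme \ H = {X}

/-- The unary tuple over `{X}` carrying value `x`. -/
def singletonTup (X : att) (x : dom) : Tup att dom :=
  fun Y => if Y = X then some x else none

/-- `X` is a border attribute: a light attribute appearing in a cross edge. -/
def BorderAttr (Q : Finset (Relation att dom)) (H : Finset att) (X : att) : Prop :=
  X ∈ attset Q ∧ X ∉ H ∧ ∃ R ∈ Q, X ∈ R.scheme ∧ IsCross H R.scheme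

/-- The set of values of the unary relation `R''_X(η)`: the intersection of
the residual relations `R'ₑ(η)` over all cross edges `e` containing `X`. -/
def Rpp (Q : Finset (Relation att dom)) (Hv : att → dom → Prop)
    (H : Finset att) (η : Tup att dom) (X : att) : Set dom :=
  { x | ∀ R ∈ Q, IsCross H R.scheme → X ∈ R.scheme →
      singletonTup X x ∈ ResidualTuples Q Hv H η R }

/-- The cartesian product `Join(Q''_J(η))` of the unary relations `R''_X(η)`,
`X ∈ J` (for `J = I` this is `Join(Q''_isolated(η))`). -/
def JoinIso (Q : Finset (Relation att dom)) (Hv : att → dom → Prop)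
    (H : Finset att) (η : Tup att dom) (J : Finset att) : Set (Tup att dom) :=
  { u | IsTupleOn u ↑J ∧ ∀ X ∈ J, ∀ x : dom, u X = some x → x ∈ Rpp Q Hv H η X }

/-! ### The query `Q*` and its hypergraph -/

/-- The result `Join(Q*)` of the query `Q*`: tuples over `I ∪ H` that
(i) project into `R_e` for every cross edge `e` incident to `I`, (ii) take a
heavy value on every attribute of `H`, and (iii) take, on every `Y ∈ I`, a
value appearing on `Y` in a relation of `Q`. -/
def JoinStar (Q : Finset (Relation att dom)) (Hv : att → dom → Prop)
    (H : Finset att) : Set (Tup att dom) :=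
  { t | IsTupleOn t ↑(isolatedSet Q H ∪ H) ∧
      (∀ R ∈ Q, IsCross H R.scheme → (R.scheme ∩ isolatedSet Q H).Nonempty →
        restrict t ↑R.scheme ∈ R.tuples) ∧
      (∀ X ∈ H, ∀ x : dom, t X = some x → Hv X x) ∧
      (∀ Y ∈ isolatedSet Q H, ∀ y : dom, t Y = some y → AppearsOn Q Y y) }

/-- The edge set `E*` of the hypergraph `G*` of `Q*`: the cross edges of `G`
incident to `I`, a unary edge `{X}` for each `X ∈ H`, and a unary edge `{Y}`
for each `Y ∈ I`.  (Its vertex set is `V* = I ∪ H`.) -/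
noncomputable def starEdges (Q : Finset (Relation att dom)) (H : Finset att) :
    Finset (Finset att) :=
  (edgeSet Q).filter (fun e => IsCross H e ∧ (e ∩ isolatedSet Q H).Nonempty)
    ∪ H.image (fun X => {X}) ∪ (isolatedSet Q H).image (fun Y => {Y})

/-! ### The reduced query `Q''(η)` -/

/-- The reduced relation `R''ₑ(η)` of a light edge `e = scheme R`: the tuples
of `R'ₑ(η)` whose values on border attributes survive the semi-join
reduction. -/
def ReducedTuples (Q : Finset (Relation att dom)) (Hv : att → dom → Prop)
    (H : Finset att) (η : Tup att dom) (R : Relation att dom) : Set (Tup att dom) :=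
  { u | u ∈ ResidualTuples Q Hv H η R ∧
      ∀ X ∈ R.scheme, BorderAttr Q H X → ∀ x : dom, u X = some x → x ∈ Rpp Q Hv H η X }

/-- The result `Join(Q''_light(η))`: tuples over `L \ I` whose projection on
every light edge belongs to the corresponding reduced relation. -/
def JoinLight (Q : Finset (Relation att dom)) (Hv : att → dom → Prop)
    (H : Finset att) (η : Tup att dom) : Set (Tup att dom) :=
  { u | IsTupleOn u ↑((attset Q \ H) \ isolatedSet Q H) ∧
      ∀ R ∈ Q, R.scheme ∩ H = ∅ → restrict u ↑R.scheme ∈ ReducedTuples Q Hv H η R }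

/-- The result `Join(Q''(η))` of the reduced query: tuples over `L` whose
projections on light edges are in the reduced relations and whose values on
isolated attributes are in the corresponding unary relations. -/
def JoinReduced (Q : Finset (Relation att dom)) (Hv : att → dom → Prop)
    (H : Finset att) (η : Tup att dom) : Set (Tup att dom) :=
  { u | IsTupleOn u ↑(attset Q \ H) ∧
      (∀ R ∈ Q, R.scheme ∩ H = ∅ → restrict u ↑R.scheme ∈ ReducedTuples Q Hv H η R) ∧
      (∀ X ∈ isolatedSet Q H, ∀ x : dom, u X = some x → x ∈ Rpp Q Hv H η X) }


lemma restrict_eq_self {u : Tup att dom} {U : Set att} (h : IsTupleOn u U) :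
    restrict u U = u := by
  funext x
  by_cases hx : x ∈ U
  · simp [restrict, hx]
  · simp only [restrict, if_neg hx]
    have : ¬(u x).isSome := fun hs => hx ((h x).1 hs)
    exact (Option.not_isSome_iff_eq_none.mp this).symm

lemma restrict_restrict (u : Tup att dom) {B C : Set att} (h : C ⊆ B) :
    restrict (restrict u B) C = restrict u C := by
  funext x
  by_cases hx : x ∈ C
  · simp [restrict, hx, h hx]
  · simp [restrict, hx]

lemma isTupleOn_restrict {u : Tup att dom} {U : Set att} (h : IsTupleOn u U)
    {C : Set att} (hC : C ⊆ U) : IsTupleOn (restrict u C) C := by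
  intro x
  by_cases hx : x ∈ C
  · simp only [restrict, if_pos hx]
    exact iff_of_true ((h x).2 (hC hx)) hx
  · simp only [restrict, if_neg hx]
    exact iff_of_false (by simp) hx

lemma joinSet_finite {ι : Type} (I : Finset ι) (A : Finset att) (s : ι → Finset att)
    (T : ι → Set (Tup att dom)) (hfin : ∀ i ∈ I, (T i).Finite)
    (hcov : ∀ X ∈ A, ∃ i ∈ I, X ∈ s i) :
    {u : Tup att dom | IsTupleOn u ↑A ∧ ∀ i ∈ I, restrict u ↑(s i) ∈ T i}.Finite := by
  classical
  set J := {u : Tup att dom | IsTupleOn u ↑A ∧ ∀ i ∈ I, restrict u ↑(s i) ∈ T i} with hJ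
  have hfinpi : (Set.pi Set.univ fun i : I => T i.1).Finite :=
    Set.Finite.pi (fun i => hfin i.1 i.2)
  have himg : ((fun u => fun i : I => restrict u ↑(s i.1)) '' J).Finite :=
    hfinpi.subset (by rintro _ ⟨u, hu, rfl⟩ i _; exact hu.2 i.1 i.2)
  refine Set.Finite.of_finite_image himg ?_
  intro u hu v hv he
  funext x
  by_cases hx : x ∈ A
  · obtain ⟨i, hi, hxi⟩ := hcov x hx
    have := congrFun (congrFun he ⟨i, hi⟩) x
    simpa [restrict, hxi] using this
  · have h1 : ¬(u x).isSome := fun hs => hx (by exact_mod_cast (hu.1 x).1 hs)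
    have h2 : ¬(v x).isSome := fun hs => hx (by exact_mod_cast (hv.1 x).1 hs)
    rw [Option.not_isSome_iff_eq_none.mp h1, Option.not_isSome_iff_eq_none.mp h2]

lemma ncard_biUnion_le' {β γ : Type} (D : Finset β) (g : β → Set γ)
    (hg : ∀ o ∈ D, (g o).Finite) :
    (⋃ o ∈ D, g o).ncard ≤ ∑ o ∈ D, (g o).ncard := by
  classical
  induction D using Finset.induction_on with
  | empty => simp
  | @insert a s ha ih =>
    rw [Finset.sum_insert ha]
    have hrw : (⋃ o ∈ insert a s, g o) = g a ∪ ⋃ o ∈ s, g o := by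
      simp [Set.biUnion_insert]
    rw [hrw]
    exact le_trans (Set.ncard_union_le _ _)
      (add_le_add (le_refl _) (ih fun o ho => hg o (Finset.mem_insert_of_mem ho)))

lemma holder_ineq {ι β : Type} (S : Finset ι) (D : Finset β) (a : ι → β → ℝ) (p : ι → ℝ)
    (ha : ∀ i ∈ S, ∀ o ∈ D, 0 ≤ a i o) (hp : ∀ i ∈ S, 0 ≤ p i)
    (hp1 : ∑ i ∈ S, p i = 1) :
    ∑ o ∈ D, ∏ i ∈ S, a i o ^ p i ≤ ∏ i ∈ S, (∑ o ∈ D, a i o) ^ p i := by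
  classical
  set S' := S.filter (fun i => p i ≠ 0) with hS'
  have hS'sub : S' ⊆ S := Finset.filter_subset _ _
  have hout : ∀ i ∈ S, i ∉ S' → p i = 0 := by
    intro i hi hni
    by_contra h
    exact hni (Finset.mem_filter.mpr ⟨hi, h⟩)
  have hLrw : ∀ o, ∏ i ∈ S, a i o ^ p i = ∏ i ∈ S', a i o ^ p i := by
    intro o
    exact (Finset.prod_subset hS'sub (fun i hi hni => by
      rw [hout i hi hni, Real.rpow_zero])).symm
  have hRrw : ∏ i ∈ S, (∑ o ∈ D, a i o) ^ p i = ∏ i ∈ S', (∑ o ∈ D, a i o) ^ p i :=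
    (Finset.prod_subset hS'sub (fun i hi hni => by
      rw [hout i hi hni, Real.rpow_zero])).symm
  have hsum' : ∑ i ∈ S', p i = 1 := by
    rw [hS', Finset.sum_filter_ne_zero]; exact hp1
  simp only [hLrw, hRrw]
  by_cases hz : ∀ i ∈ S', 0 < ∑ o ∈ D, a i o
  · set Sm : ι → ℝ := fun i => ∑ o ∈ D, a i o with hSm
    have key : ∀ o ∈ D, ∏ i ∈ S', (a i o / Sm i) ^ p i ≤ ∑ i ∈ S', p i * (a i o / Sm i) :=
      fun o ho => Real.geom_mean_le_arith_mean_weighted S' p _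
        (fun i hi => hp i (hS'sub hi)) hsum'
        (fun i hi => div_nonneg (ha i (hS'sub hi) o ho) (hz i hi).le)
    have hsplit : ∀ o ∈ D, ∏ i ∈ S', (a i o / Sm i) ^ p i
        = (∏ i ∈ S', a i o ^ p i) / ∏ i ∈ S', Sm i ^ p i := by
      intro o ho
      rw [← Finset.prod_div_distrib]
      exact Finset.prod_congr rfl fun i hi =>
        Real.div_rpow (ha i (hS'sub hi) o ho) (hz i hi).le _
    have hC : 0 < ∏ i ∈ S', Sm i ^ p i :=
      Finset.prod_pos fun i hi => Real.rpow_pos_of_pos (hz i hi) _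
    have hsum_le : ∑ o ∈ D, (∏ i ∈ S', a i o ^ p i) / (∏ i ∈ S', Sm i ^ p i) ≤ 1 := by
      calc ∑ o ∈ D, (∏ i ∈ S', a i o ^ p i) / (∏ i ∈ S', Sm i ^ p i)
          = ∑ o ∈ D, ∏ i ∈ S', (a i o / Sm i) ^ p i :=
            Finset.sum_congr rfl fun o ho => (hsplit o ho).symm
        _ ≤ ∑ o ∈ D, ∑ i ∈ S', p i * (a i o / Sm i) :=
            Finset.sum_le_sum key
        _ = ∑ i ∈ S', p i * (Sm i / Sm i) := by
            rw [Finset.sum_comm]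
            exact Finset.sum_congr rfl fun i hi => by
              rw [← Finset.mul_sum, ← Finset.sum_div]
        _ = ∑ i ∈ S', p i := Finset.sum_congr rfl fun i hi => by
              rw [div_self (hz i hi).ne', mul_one]
        _ = 1 := hsum'
    rw [← Finset.sum_div] at hsum_le
    exact (div_le_one hC).mp hsum_le
  · push_neg at hz
    obtain ⟨i, hi, hSm⟩ := hz
    have hnonneg : 0 ≤ ∑ o ∈ D, a i o :=
      Finset.sum_nonneg fun o ho => ha i (hS'sub hi) o ho
    have hSm0 : ∑ o ∈ D, a i o = 0 := le_antisymm hSm hnonneg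
    have hao : ∀ o ∈ D, a i o = 0 :=
      (Finset.sum_eq_zero_iff_of_nonneg fun o ho => ha i (hS'sub hi) o ho).mp hSm0
    have hpne : p i ≠ 0 := (Finset.mem_filter.mp hi).2
    have hL0 : ∑ o ∈ D, ∏ j ∈ S', a j o ^ p j = 0 :=
      Finset.sum_eq_zero fun o ho =>
        Finset.prod_eq_zero hi (by rw [hao o ho]; exact Real.zero_rpow hpne)
    rw [hL0]
    exact Finset.prod_nonneg fun j hj =>
      Real.rpow_nonneg (Finset.sum_nonneg fun o ho => ha j (hS'sub hj) o ho) _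

lemma abstract_agm {ι : Type} (A : Finset att) (I : Finset ι) (s : ι → Finset att)
    (T : ι → Set (Tup att dom)) (w : ι → ℝ)
    (hs : ∀ i ∈ I, s i ⊆ A)
    (hfin : ∀ i ∈ I, (T i).Finite)
    (hwf : ∀ i ∈ I, ∀ v ∈ T i, IsTupleOn v ↑(s i))
    (hw0 : ∀ i ∈ I, 0 ≤ w i)
    (hcov : ∀ X ∈ A, 1 ≤ ∑ i ∈ I.filter (fun i => X ∈ s i), w i) :
    (({u : Tup att dom | IsTupleOn u ↑A ∧ ∀ i ∈ I, restrict u ↑(s i) ∈ T i}).ncard : ℝ)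
      ≤ ∏ i ∈ I, ((T i).ncard : ℝ) ^ w i := by
  classical
  induction A using Finset.strongInductionOn generalizing s T with
  | _ A ih =>
  by_cases hne : ∀ i ∈ I, (T i).Nonempty
  swap
  · push_neg at hne
    obtain ⟨i, hi, hTi⟩ := hne
    have hTi' : T i = ∅ := hTi
    have hJ : {u : Tup att dom | IsTupleOn u ↑A ∧ ∀ i ∈ I, restrict u ↑(s i) ∈ T i} = ∅ := by
      ext u
      simp only [Set.mem_setOf_eq, Set.mem_empty_iff_false, iff_false, not_and]
      intro _ h
      have h2 := h i hi
      rw [hTi'] at h2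
      exact h2
    rw [hJ]
    simp only [Set.ncard_empty, Nat.cast_zero]
    exact Finset.prod_nonneg fun j _ => Real.rpow_nonneg (Nat.cast_nonneg _) _
  · have hT1 : ∀ i ∈ I, (1:ℝ) ≤ ((T i).ncard : ℝ) := by
      intro i hi
      have : 0 < (T i).ncard := (Set.ncard_pos (hfin i hi)).mpr (hne i hi)
      exact_mod_cast this
    rcases A.eq_empty_or_nonempty with hA | ⟨X, hX⟩
    · subst hA
      rw [show ((∅:Finset att) : Set att) = (∅ : Set att) from Finset.coe_empty]
      have hsub : {u : Tup att dom | IsTupleOn u (∅ : Set att) ∧ ∀ i ∈ I, restrict u ↑(s i) ∈ T i}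
          ⊆ {(fun _ => none : Tup att dom)} := by
        intro u hu
        have h1 := hu.1
        have hu0 : u = fun _ => none := by
          funext x
          have : ¬(u x).isSome := fun hs' => by simpa using (h1 x).1 hs'
          exact Option.not_isSome_iff_eq_none.mp this
        simp [hu0]
      have hle : ({u : Tup att dom | IsTupleOn u (∅ : Set att) ∧ ∀ i ∈ I, restrict u ↑(s i) ∈ T i}).ncard ≤ 1 := by
        have := Set.ncard_le_ncard hsub (Set.finite_singleton _)
        simpa using this
      have h1' : (1:ℝ) ≤ ∏ i ∈ I, ((T i).ncard : ℝ) ^ w i := by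
        have := Finset.prod_le_prod (s := I) (f := fun _ => (1:ℝ))
          (g := fun i => ((T i).ncard : ℝ) ^ w i) (fun i _ => zero_le_one)
          (fun i hi => by
            calc (1:ℝ) = 1 ^ w i := (Real.one_rpow _).symm
              _ ≤ _ := Real.rpow_le_rpow zero_le_one (hT1 i hi) (hw0 i hi))
        simpa using this
      exact le_trans (by exact_mod_cast hle) h1'
    · -- inductive step: X ∈ A
      have hA'ss : A.erase X ⊂ A := Finset.erase_ssubset hX
      set A' := A.erase X with hA'def
      set s' : ι → Finset att := fun i => (s i).erase X with hs'def
      have hfilne : (I.filter fun i => X ∈ s i).Nonempty := by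
        by_contra h
        rw [Finset.not_nonempty_iff_eq_empty] at h
        have h1 := hcov X hX
        rw [h, Finset.sum_empty] at h1
        linarith
      obtain ⟨i₀, hi₀f⟩ := hfilne
      have hi₀ : i₀ ∈ I := (Finset.mem_filter.mp hi₀f).1
      have hXi₀ : X ∈ s i₀ := (Finset.mem_filter.mp hi₀f).2
      set D : Finset (Option dom) := ((hfin i₀ hi₀).image (fun v => v X)).toFinset with hD
      set T' : Option dom → ι → Set (Tup att dom) :=
        fun o i => (fun v => restrict v ↑((s i).erase X)) '' {v ∈ T i | X ∈ s i → v X = o}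
        with hT'def
      have hs'2 : ∀ i ∈ I, s' i ⊆ A' := fun i hi => Finset.erase_subset_erase X (hs i hi)
      have hsub' : ∀ (o : Option dom) (i : ι), {v ∈ T i | X ∈ s i → v X = o} ⊆ T i :=
        fun o i => Set.sep_subset _ _
      have hfin' : ∀ (o : Option dom), ∀ i ∈ I, (T' o i).Finite :=
        fun o i hi => ((hfin i hi).subset (hsub' o i)).image _
      have hwf' : ∀ (o : Option dom), ∀ i ∈ I, ∀ v ∈ T' o i, IsTupleOn v ↑(s' i) := by
        rintro o i hi v ⟨v₀, hv₀, rfl⟩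
        exact isTupleOn_restrict (hwf i hi v₀ hv₀.1)
          (Finset.coe_subset.mpr (Finset.erase_subset _ _))
      have hcov' : ∀ Y ∈ A', 1 ≤ ∑ i ∈ I.filter (fun i => Y ∈ s' i), w i := by
        intro Y hY
        have hYX : Y ≠ X := (Finset.mem_erase.mp hY).1
        have hYA : Y ∈ A := (Finset.mem_erase.mp hY).2
        have hfe : I.filter (fun i => Y ∈ s' i) = I.filter (fun i => Y ∈ s i) := by
          apply Finset.filter_congr
          intro i hi
          simp [hs'def, Finset.mem_erase, hYX]
        rw [hfe]
        exact hcov Y hYA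
      have hIH : ∀ o : Option dom,
          (({u : Tup att dom | IsTupleOn u ↑A' ∧ ∀ i ∈ I, restrict u ↑(s' i) ∈ T' o i}).ncard : ℝ)
          ≤ ∏ i ∈ I, ((T' o i).ncard : ℝ) ^ w i :=
        fun o => ih A' hA'ss s' (T' o) hs'2 (hfin' o) (hwf' o) hcov'
      set J := {u : Tup att dom | IsTupleOn u ↑A ∧ ∀ i ∈ I, restrict u ↑(s i) ∈ T i} with hJdef
      set J' : Option dom → Set (Tup att dom) :=
        fun o => {u : Tup att dom | IsTupleOn u ↑A' ∧ ∀ i ∈ I, restrict u ↑(s' i) ∈ T' o i}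
        with hJ'def
      have hexcov : ∀ (B : Finset att) (t : ι → Finset att),
          (∀ Y ∈ B, 1 ≤ ∑ i ∈ I.filter (fun i => Y ∈ t i), w i) →
          ∀ Y ∈ B, ∃ i ∈ I, Y ∈ t i := by
        intro B t h Y hY
        by_contra hcon
        push_neg at hcon
        have hfe : I.filter (fun i => Y ∈ t i) = ∅ :=
          Finset.filter_eq_empty_iff.mpr (by intro i hi; exact hcon i hi)
        have h1 := h Y hY
        rw [hfe, Finset.sum_empty] at h1
        linarith
      have hJfin : J.Finite := joinSet_finite I A s T hfin (hexcov A s hcov)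
      have hJ'fin : ∀ o : Option dom, (J' o).Finite := fun o =>
        joinSet_finite I A' s' (T' o) (hfin' o) (hexcov A' s' hcov')
      -- Step A : |J| ≤ ∑_{o ∈ D} |J' o|
      have hsubJ : J ⊆ ⋃ o ∈ D, {u ∈ J | u X = o} := by
        intro u hu
        have h2 := hu.2 i₀ hi₀
        have hmem : u X ∈ D := by
          rw [hD]
          rw [Set.Finite.mem_toFinset]
          exact ⟨restrict u ↑(s i₀), h2, by simp [restrict, hXi₀]⟩
        exact Set.mem_biUnion hmem ⟨hu, rfl⟩
      have hmaps : ∀ o : Option dom, ∀ u ∈ {u ∈ J | u X = o},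
          restrict u ↑A' ∈ J' o := by
        rintro o u ⟨hu, huX⟩
        constructor
        · exact isTupleOn_restrict hu.1 (Finset.coe_subset.mpr (Finset.erase_subset _ _))
        · intro i hi
          rw [restrict_restrict u (Finset.coe_subset.mpr (hs'2 i hi))]
          refine ⟨restrict u ↑(s i), ⟨hu.2 i hi, fun hXi => ?_⟩, ?_⟩
          · rw [← huX]; simp [restrict, hXi]
          · show restrict (restrict u ↑(s i)) ↑((s i).erase X) = restrict u ↑(s' i)
            exact restrict_restrict u (Finset.coe_subset.mpr (Finset.erase_subset X (s i)))
      have hinj : ∀ o : Option dom, Set.InjOn (fun u => restrict u ↑A') {u ∈ J | u X = o} := by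
        rintro o u ⟨hu, huX⟩ v ⟨hv, hvX⟩ he
        funext x
        by_cases hx : x = X
        · rw [hx, huX, hvX]
        · by_cases hxA : x ∈ A
          · have hxA' : x ∈ A' := Finset.mem_erase.mpr ⟨hx, hxA⟩
            have := congrFun he x
            simpa [restrict, hxA'] using this
          · have h1 : ¬(u x).isSome := fun hs' => hxA (by exact_mod_cast (hu.1 x).1 hs')
            have h2 : ¬(v x).isSome := fun hs' => hxA (by exact_mod_cast (hv.1 x).1 hs')
            rw [Option.not_isSome_iff_eq_none.mp h1, Option.not_isSome_iff_eq_none.mp h2]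
      have hcard1 : (J.ncard : ℝ) ≤ ∑ o ∈ D, ((J' o).ncard : ℝ) := by
        have t1 : J.ncard ≤ (⋃ o ∈ D, {u ∈ J | u X = o}).ncard :=
          Set.ncard_le_ncard hsubJ
            (Set.Finite.biUnion D.finite_toSet fun o _ => hJfin.subset (Set.sep_subset _ _))
        have t2 : (⋃ o ∈ D, {u ∈ J | u X = o}).ncard ≤ ∑ o ∈ D, ({u ∈ J | u X = o}).ncard :=
          ncard_biUnion_le' D _ (fun o _ => hJfin.subset (Set.sep_subset _ _))
        have t3 : ∀ o ∈ D, ({u ∈ J | u X = o}).ncard ≤ (J' o).ncard := fun o _ =>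
          Set.ncard_le_ncard_of_injOn _ (hmaps o) (hinj o) (hJ'fin o)
        exact_mod_cast le_trans t1 (le_trans t2 (Finset.sum_le_sum t3))
      -- Step C : Hölder bound on the sum
      set S : Finset ι := I.filter (fun i => X ∈ s i) with hSdef
      set wX : ℝ := ∑ i ∈ S, w i with hwXdef
      have hwX : 1 ≤ wX := hcov X hX
      have hwXpos : 0 < wX := lt_of_lt_of_le one_pos hwX
      set p : ι → ℝ := fun i => w i / wX with hpdef
      have hp0 : ∀ i ∈ I, 0 ≤ p i := fun i hi => div_nonneg (hw0 i hi) hwXpos.le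
      have hp1 : ∑ i ∈ S, p i = 1 := by
        rw [hpdef]
        rw [← Finset.sum_div]
        exact div_self (ne_of_gt hwXpos)
      set a : ι → Option dom → ℝ := fun i o => (({v ∈ T i | v X = o}).ncard : ℝ) with hadef
      have f2 : ∀ (o : Option dom), ∀ i ∈ I, ((T' o i).ncard : ℝ) ≤ ((T i).ncard : ℝ) := by
        intro o i hi
        exact_mod_cast le_trans (Set.ncard_image_le ((hfin i hi).subset (hsub' o i)))
          (Set.ncard_le_ncard (hsub' o i) (hfin i hi))
      have f1 : ∀ (o : Option dom), ∀ i ∈ S, ((T' o i).ncard : ℝ) ≤ a i o := by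
        intro o i hiS
        have hiI : i ∈ I := (Finset.mem_filter.mp hiS).1
        have hXi : X ∈ s i := (Finset.mem_filter.mp hiS).2
        have hEq : {v ∈ T i | X ∈ s i → v X = o} = {v ∈ T i | v X = o} := by
          ext v; simp [hXi]
        have hle2 : (T' o i).ncard ≤ ({v ∈ T i | X ∈ s i → v X = o}).ncard :=
          Set.ncard_image_le ((hfin i hiI).subset (hsub' o i))
        rw [hEq] at hle2
        show ((T' o i).ncard : ℝ) ≤ (({v ∈ T i | v X = o}).ncard : ℝ)
        exact_mod_cast hle2
      have f3 : ∀ i ∈ I, ∑ o ∈ D, a i o ≤ ((T i).ncard : ℝ) := by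
        intro i hi
        set F := (hfin i hi).toFinset with hF
        have ha' : ∀ o : Option dom, a i o = ((F.filter (fun v => v X = o)).card : ℝ) := by
          intro o
          have hfib : {v ∈ T i | v X = o} = ↑(F.filter (fun v => v X = o)) := by
            ext v
            simp [hF, Set.Finite.mem_toFinset]
          rw [hadef]
          simp only []
          rw [hfib, Set.ncard_coe_finset]
        have hdisj : ∑ o ∈ D, (F.filter (fun v => v X = o)).card
            = (D.biUnion (fun o => F.filter (fun v => v X = o))).card := by
          rw [Finset.card_biUnion]
          intro o _ o' _ hne'
          refine Finset.disjoint_left.mpr ?_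
          intro v hv hv'
          exact hne' (by rw [← (Finset.mem_filter.mp hv).2, (Finset.mem_filter.mp hv').2])
        have hsub2 : D.biUnion (fun o => F.filter fun v => v X = o) ⊆ F :=
          Finset.biUnion_subset.mpr fun o _ => Finset.filter_subset _ _
        have hle3 : ∑ o ∈ D, (F.filter fun v => v X = o).card ≤ F.card :=
          hdisj ▸ Finset.card_le_card hsub2
        have hTF : (T i).ncard = F.card := Set.ncard_eq_toFinset_card _ (hfin i hi)
        calc ∑ o ∈ D, a i o
            = ((∑ o ∈ D, (F.filter fun v => v X = o).card : ℕ) : ℝ) := by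
              push_cast
              exact Finset.sum_congr rfl fun o _ => ha' o
          _ ≤ (F.card : ℝ) := by exact_mod_cast hle3
          _ = _ := by rw [hTF]
      have hTeqN : ∀ (o : Option dom), ∀ i ∈ I, i ∉ S → T' o i = T i := by
        intro o i hi hniS
        have hXi : X ∉ s i := fun h => hniS (Finset.mem_filter.mpr ⟨hi, h⟩)
        have h2 : (s i).erase X = s i := Finset.erase_eq_of_notMem hXi
        ext v
        constructor
        · rintro ⟨v₀, hv₀, rfl⟩
          show restrict v₀ ↑((s i).erase X) ∈ T i
          rw [h2, restrict_eq_self (hwf i hi v₀ hv₀.1)]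
          exact hv₀.1
        · intro hv
          refine ⟨v, ⟨hv, fun h => absurd h hXi⟩, ?_⟩
          show restrict v ↑((s i).erase X) = v
          rw [h2]
          exact restrict_eq_self (hwf i hi v hv)
      have step_i : ∀ (o : Option dom), ∀ i ∈ S,
          ((T' o i).ncard : ℝ) ^ w i ≤ a i o ^ p i * ((T i).ncard : ℝ) ^ (w i - p i) := by
        intro o i hiS
        have hiI : i ∈ I := (Finset.mem_filter.mp hiS).1
        by_cases hwi : w i = 0
        · have hpi0 : p i = 0 := by rw [hpdef]; simp [hwi]
          simp [hwi, hpi0, Real.rpow_zero]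
        · have hb0 : (0:ℝ) ≤ ((T' o i).ncard : ℝ) := Nat.cast_nonneg _
          have hpi : 0 ≤ p i := hp0 i hiI
          have hwp : 0 ≤ w i - p i := by
            have : p i ≤ w i := by
              rw [hpdef]
              exact div_le_self (hw0 i hiI) hwX
            linarith
          have he : p i + (w i - p i) = w i := by ring
          calc ((T' o i).ncard : ℝ) ^ w i
              = ((T' o i).ncard : ℝ) ^ (p i + (w i - p i)) := by rw [he]
            _ = ((T' o i).ncard : ℝ) ^ p i * ((T' o i).ncard : ℝ) ^ (w i - p i) :=
                Real.rpow_add' hb0 (by rw [he]; exact hwi)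
            _ ≤ a i o ^ p i * ((T i).ncard : ℝ) ^ (w i - p i) :=
                mul_le_mul (Real.rpow_le_rpow hb0 (f1 o i hiS) hpi)
                  (Real.rpow_le_rpow hb0 (f2 o i hiI) hwp)
                  (Real.rpow_nonneg hb0 _)
                  (Real.rpow_nonneg (Nat.cast_nonneg _) _)
      have main : ∑ o ∈ D, ∏ i ∈ I, ((T' o i).ncard : ℝ) ^ w i
          ≤ ∏ i ∈ I, ((T i).ncard : ℝ) ^ w i := by
        set CN := ∏ i ∈ I.filter (fun i => ¬ X ∈ s i), ((T i).ncard : ℝ) ^ w i with hCNdef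
        have hCN0 : 0 ≤ CN :=
          Finset.prod_nonneg fun i _ => Real.rpow_nonneg (Nat.cast_nonneg _) _
        have hprodsplit : ∀ o : Option dom, ∏ i ∈ I, ((T' o i).ncard : ℝ) ^ w i
            = (∏ i ∈ S, ((T' o i).ncard : ℝ) ^ w i) * CN := by
          intro o
          rw [← Finset.prod_filter_mul_prod_filter_not I (fun i => X ∈ s i)
            (fun i => ((T' o i).ncard : ℝ) ^ w i)]
          congr 1
          refine Finset.prod_congr rfl fun i hi => ?_
          rw [hTeqN o i (Finset.mem_filter.mp hi).1
            (fun hS' => (Finset.mem_filter.mp hi).2 (Finset.mem_filter.mp hS').2)]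
        set c2 := ∏ i ∈ S, ((T i).ncard : ℝ) ^ (w i - p i) with hc2def
        have hc20 : 0 ≤ c2 :=
          Finset.prod_nonneg fun i _ => Real.rpow_nonneg (Nat.cast_nonneg _) _
        have hchain1 : ∀ o ∈ D, ∏ i ∈ S, ((T' o i).ncard : ℝ) ^ w i
            ≤ (∏ i ∈ S, a i o ^ p i) * c2 := by
          intro o _
          rw [hc2def, ← Finset.prod_mul_distrib]
          exact Finset.prod_le_prod (fun i _ => Real.rpow_nonneg (Nat.cast_nonneg _) _)
            (fun i hi => step_i o i hi)
        have hhold : ∑ o ∈ D, ∏ i ∈ S, a i o ^ p i ≤ ∏ i ∈ S, (∑ o ∈ D, a i o) ^ p i :=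
          holder_ineq S D a p (fun i _ o _ => Nat.cast_nonneg _)
            (fun i hi => hp0 i (Finset.mem_filter.mp hi).1) hp1
        have hhold2 : ∏ i ∈ S, (∑ o ∈ D, a i o) ^ p i ≤ ∏ i ∈ S, ((T i).ncard : ℝ) ^ p i :=
          Finset.prod_le_prod
            (fun i _ => Real.rpow_nonneg (Finset.sum_nonneg fun o _ => Nat.cast_nonneg _) _)
            (fun i hi => Real.rpow_le_rpow (Finset.sum_nonneg fun o _ => Nat.cast_nonneg _)
              (f3 i (Finset.mem_filter.mp hi).1) (hp0 i (Finset.mem_filter.mp hi).1))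
        calc ∑ o ∈ D, ∏ i ∈ I, ((T' o i).ncard : ℝ) ^ w i
            = ∑ o ∈ D, (∏ i ∈ S, ((T' o i).ncard : ℝ) ^ w i) * CN :=
              Finset.sum_congr rfl fun o _ => hprodsplit o
          _ = (∑ o ∈ D, ∏ i ∈ S, ((T' o i).ncard : ℝ) ^ w i) * CN := by
              rw [← Finset.sum_mul]
          _ ≤ ((∑ o ∈ D, ∏ i ∈ S, a i o ^ p i) * c2) * CN := by
              refine mul_le_mul_of_nonneg_right ?_ hCN0
              calc ∑ o ∈ D, ∏ i ∈ S, ((T' o i).ncard : ℝ) ^ w i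
                  ≤ ∑ o ∈ D, (∏ i ∈ S, a i o ^ p i) * c2 := Finset.sum_le_sum hchain1
                _ = (∑ o ∈ D, ∏ i ∈ S, a i o ^ p i) * c2 := by rw [← Finset.sum_mul]
          _ ≤ ((∏ i ∈ S, ((T i).ncard : ℝ) ^ p i) * c2) * CN := by
              refine mul_le_mul_of_nonneg_right
                (mul_le_mul_of_nonneg_right (le_trans hhold hhold2) hc20) hCN0
          _ = (∏ i ∈ S, ((T i).ncard : ℝ) ^ w i) * CN := by
              congr 1
              rw [hc2def, ← Finset.prod_mul_distrib]
              refine Finset.prod_congr rfl fun i hi => ?_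
              have hpos : (0:ℝ) < ((T i).ncard : ℝ) :=
                lt_of_lt_of_le one_pos (hT1 i (Finset.mem_filter.mp hi).1)
              rw [← Real.rpow_add hpos]
              congr 1
              ring
          _ = ∏ i ∈ I, ((T i).ncard : ℝ) ^ w i :=
              Finset.prod_filter_mul_prod_filter_not I _ _
      calc (J.ncard : ℝ)
          ≤ ∑ o ∈ D, ((J' o).ncard : ℝ) := hcard1
        _ ≤ ∑ o ∈ D, ∏ i ∈ I, ((T' o i).ncard : ℝ) ^ w i :=
            Finset.sum_le_sum fun o _ => hIH o
        _ ≤ ∏ i ∈ I, ((T i).ncard : ℝ) ^ w i := main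


/-- **AGM bound.** For a simple binary join query `Q` and any
fractional edge covering `W` of its hypergraph,
`|Join(Q)| ≤ ∏_{e ∈ E} |R_e|^{W(e)}`.  (Since `Q` is simple, the product
over the edges `e ∈ E` is the product over the relations `R ∈ Q` of
`|R|^{W(scheme R)}`.) -/
theorem agm_bound [Finite att] [Countable dom] [Infinite dom]
    (Q : Finset (Relation att dom)) (hS : SimpleQ Q) (hB : BinaryQ Q)
    (W : Finset att → ℝ) (hW : IsFracEdgeCover (attset Q) (edgeSet Q) W) :
    ((JoinQ Q).ncard : ℝ) ≤ ∏ R ∈ Q, (R.tuples.ncard : ℝ) ^ W R.scheme := by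
  classical
  have hcov : ∀ X ∈ attset Q, 1 ≤ ∑ R ∈ Q.filter (fun R => X ∈ R.scheme), W R.scheme := by
    intro X hX
    have h := hW.2 X hX
    unfold vertexWeight at h
    rw [edgeSet, Finset.filter_image] at h
    rw [Finset.sum_image (fun R hR S hS' hES =>
      hS R (Finset.mem_of_mem_filter R hR) S (Finset.mem_of_mem_filter S hS') hES)] at h
    exact h
  have key := abstract_agm (attset Q) Q (fun R => R.scheme) (fun R => R.tuples)
      (fun R => W R.scheme)
      (fun R hR => Finset.subset_biUnion_of_mem _ hR)
      (fun R _ => R.finite) (fun R _ => R.wf)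
      (fun R hR => (hW.1 _ (Finset.mem_image_of_mem _ hR)).1)
      hcov
  exact key

end BinaryJoins
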